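/- arXiv:1610.03136 — 2 statements merged into one kernel-verified Lean document; each statement's English description precedes it below -/
import Mathlib

section
/- Let G and H be unital associative F-algebras with all triple commutators zero. For n ≥ 1 and g_i ∈ G, h_i ∈ H, the left-normed commutator c_{2n+1} = [g_1 ⊗ h_1, ..., g_{2n+1} ⊗ h_{2n+1}] in G ⊗ H equals [g_1,g_2][g_3,g_4]···[g_{2n-1},g_{2n}] g_{2n+1} ⊗ [h_1 h_2, h_3][h_4,h_5]···[h_{2n},h_{2n+1}] + [g_2 g_1, g_3][g_4,g_5]···[g_{2n},g_{2n+1}] ⊗ [h_1,h_2][h_3,h_4]···[h_{2n-1},h_{2n}] h_{2n+1}. -/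
open scoped TensorProduct

/-- Left-normed commutator: `lc a [b₁,...,bₙ] = [a, b₁, ..., bₙ]`. -/
def lc {A : Type*} [Ring A] : A → List A → A
  | a, [] => a
  | a, b :: l => lc ⁅a, b⁆ l

/-- Left-normed commutator of a list; `lcomm [a₁,...,aₙ] = [a₁,...,aₙ]`, `lcomm [] = 0`. -/
def lcomm {A : Type*} [Ring A] : List A → A
  | [] => 0
  | a :: l => lc a l

/-- `Tideal A n` = two-sided ideal of `A` generated by all left-normed commutators of length `n`. -/
def Tideal (A : Type*) [Ring A] (n : ℕ) : TwoSidedIdeal A :=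
  TwoSidedIdeal.span {x | ∃ l : List A, l.length = n ∧ x = lcomm l}


section aux
variable {A : Type*} [Ring A]

lemma lc_append (a : A) (l : List A) (b : A) : lc a (l ++ [b]) = ⁅lc a l, b⁆ := by
  induction l generalizing a with
  | nil => simp [lc]
  | cons c l ih => simp [lc, ih]

lemma lcomm_append_singleton (l : List A) (hl : l ≠ []) (b : A) :
    lcomm (l ++ [b]) = ⁅lcomm l, b⁆ := by
  cases l with
  | nil => exact absurd rfl hl
  | cons a l => simp [lcomm, lc_append]

lemma lcomm_three (a b c : A) : lcomm [a, b, c] = ⁅⁅a, b⁆, c⁆ := rfl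

def central (c : A) : Prop := ∀ x, c * x = x * c

lemma central.mul {c d : A} (hc : central c) (hd : central d) : central (c * d) := fun x => by
  rw [mul_assoc, hd, ← mul_assoc, hc, mul_assoc]

lemma central_one : central (1 : A) := fun x => by simp

lemma peel12 {B : Type*} [Ring B] (f : ℕ → B) (k : ℕ) :
    (List.ofFn fun i : Fin (k+1) => ⁅f (2*↑i+1), f (2*↑i+2)⁆).prod
      = (List.ofFn fun i : Fin k => ⁅f (2*↑i+1), f (2*↑i+2)⁆).prod * ⁅f (2*k+1), f (2*k+2)⁆ := by
  rw [List.ofFn_succ']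
  simp

lemma peel45 {B : Type*} [Ring B] (f : ℕ → B) (k : ℕ) :
    (List.ofFn fun i : Fin (k+1) => ⁅f (2*↑i+4), f (2*↑i+5)⁆).prod
      = (List.ofFn fun i : Fin k => ⁅f (2*↑i+4), f (2*↑i+5)⁆).prod * ⁅f (2*k+4), f (2*k+5)⁆ := by
  rw [List.ofFn_succ']
  simp

lemma central_mul_lie {c : A} (hc : central c) (a b : A) : ⁅c * a, b⁆ = c * ⁅a, b⁆ := by
  rw [Ring.lie_def, Ring.lie_def, mul_sub, mul_assoc, ← mul_assoc b c a, ← hc b, mul_assoc]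

lemma add_lie_ring (a b c : A) : ⁅a + b, c⁆ = ⁅a, c⁆ + ⁅b, c⁆ := by
  simp only [Ring.lie_def, add_mul, mul_add]
  abel

lemma central_prod (l : List A) (h : ∀ c ∈ l, central c) : central l.prod := by
  induction l with
  | nil => simpa using central_one
  | cons a l ih =>
    simpa using (h a (by simp)).mul (ih fun c hc => h c (by simp [hc]))

end aux

section tens
variable (F : Type*) [Field F] (G H : Type*) [Ring G] [Algebra F G] [Ring H] [Algebra F H]

lemma lie_tmul (a b : G) (u v : H) :
    ⁅(a ⊗ₜ[F] u : G ⊗[F] H), b ⊗ₜ[F] v⁆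
      = ⁅a, b⁆ ⊗ₜ[F] (u * v) + (b * a) ⊗ₜ[F] ⁅u, v⁆ := by
  simp only [Ring.lie_def, Algebra.TensorProduct.tmul_mul_tmul,
    TensorProduct.sub_tmul, TensorProduct.tmul_sub]
  abel

lemma lie_tmul_left_central {a : G} (ha : central a) (b : G) (u v : H) :
    ⁅(a ⊗ₜ[F] u : G ⊗[F] H), b ⊗ₜ[F] v⁆ = (a * b) ⊗ₜ[F] ⁅u, v⁆ := by
  rw [lie_tmul]
  have : ⁅a, b⁆ = 0 := by rw [Ring.lie_def, ha b, sub_self]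
  rw [this, TensorProduct.zero_tmul, ha b, zero_add]

lemma lie_tmul_right_central (a b : G) {u : H} (hu : central u) (v : H) :
    ⁅(a ⊗ₜ[F] u : G ⊗[F] H), b ⊗ₜ[F] v⁆ = ⁅a, b⁆ ⊗ₜ[F] (u * v) := by
  rw [lie_tmul]
  have : ⁅u, v⁆ = 0 := by rw [Ring.lie_def, hu v, sub_self]
  rw [this, TensorProduct.tmul_zero, add_zero]

end tens

section main
variable {F : Type*} [Field F] {G H : Type*} [Ring G] [Algebra F G] [Ring H] [Algebra F H]

lemma comm_central (hG : ∀ a b c : G, ⁅⁅a, b⁆, c⁆ = 0) (a b : G) : central ⁅a, b⁆ := by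
  intro x
  have := hG a b x
  rw [Ring.lie_def] at this
  exact sub_eq_zero.mp this

lemma key (hG : ∀ a b c : G, ⁅⁅a, b⁆, c⁆ = 0) (hH : ∀ a b c : H, ⁅⁅a, b⁆, c⁆ = 0)
    (g : ℕ → G) (h : ℕ → H) (m : ℕ) :
    lcomm (List.ofFn fun i : Fin (2 * (m+1) + 1) => (g (i + 1) ⊗ₜ[F] h (i + 1) : G ⊗[F] H))
      = ((List.ofFn fun i : Fin (m+1) => ⁅g (2 * i + 1), g (2 * i + 2)⁆).prod * g (2 * (m+1) + 1))
          ⊗ₜ[F] (⁅h 1 * h 2, h 3⁆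
            * (List.ofFn fun i : Fin m => ⁅h (2 * i + 4), h (2 * i + 5)⁆).prod)
        + (⁅g 2 * g 1, g 3⁆
            * (List.ofFn fun i : Fin m => ⁅g (2 * i + 4), g (2 * i + 5)⁆).prod)
          ⊗ₜ[F] ((List.ofFn fun i : Fin (m+1) => ⁅h (2 * i + 1), h (2 * i + 2)⁆).prod
            * h (2 * (m+1) + 1)) := by
  induction m with
  | zero =>
    simp only [List.ofFn_succ, List.ofFn_zero, Fin.val_succ, Fin.val_zero, List.prod_cons,
      List.prod_nil, mul_one]
    norm_num
    rw [lcomm_three]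
    rw [lie_tmul, add_lie_ring,
      lie_tmul_left_central (F := F) (G := G) (H := H) (ha := comm_central hG (g 1) (g 2)),
      lie_tmul_right_central (F := F) (G := G) (H := H) (hu := comm_central hH (h 1) (h 2))]
  | succ m ih =>
    have hsplit : (List.ofFn fun i : Fin (2*(m+1+1)+1) => (g (↑i+1) ⊗ₜ[F] h (↑i+1) : G ⊗[F] H))
        = ((List.ofFn fun i : Fin (2*(m+1)+1) => (g (↑i+1) ⊗ₜ[F] h (↑i+1) : G ⊗[F] H))
          ++ [g (2*(m+1)+2) ⊗ₜ[F] h (2*(m+1)+2)]) ++ [g (2*(m+1)+3) ⊗ₜ[F] h (2*(m+1)+3)] := by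
      rw [show 2*(m+1+1)+1 = (2*(m+1)+1) + 2 from by ring, List.ofFn_add]
      simp [List.ofFn_succ]
    rw [hsplit, lcomm_append_singleton _ (by simp) _,
      lcomm_append_singleton _ (by simp) _, ih]
    have hP : central (List.ofFn fun i : Fin (m+1) => ⁅g (2*(i:ℕ)+1), g (2*(i:ℕ)+2)⁆).prod :=
      central_prod _ (by
        intro c hc
        simp only [List.mem_ofFn] at hc
        obtain ⟨i, rfl⟩ := hc
        exact comm_central hG _ _)
    have hQ : central (List.ofFn fun i : Fin (m+1) => ⁅h (2*(i:ℕ)+1), h (2*(i:ℕ)+2)⁆).prod :=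
      central_prod _ (by
        intro c hc
        simp only [List.mem_ofFn] at hc
        obtain ⟨i, rfl⟩ := hc
        exact comm_central hH _ _)
    have hK : central (⁅h 1 * h 2, h 3⁆
        * (List.ofFn fun i : Fin m => ⁅h (2*(i:ℕ)+4), h (2*(i:ℕ)+5)⁆).prod) :=
      (comm_central hH _ _).mul (central_prod _ (by
        intro c hc
        simp only [List.mem_ofFn] at hc
        obtain ⟨i, rfl⟩ := hc
        exact comm_central hH _ _))
    have hL : central (⁅g 2 * g 1, g 3⁆
        * (List.ofFn fun i : Fin m => ⁅g (2*(i:ℕ)+4), g (2*(i:ℕ)+5)⁆).prod) :=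
      (comm_central hG _ _).mul (central_prod _ (by
        intro c hc
        simp only [List.mem_ofFn] at hc
        obtain ⟨i, rfl⟩ := hc
        exact comm_central hG _ _))
    rw [add_lie_ring,
      lie_tmul_right_central (F := F) (G := G) (H := H) (hu := hK),
      lie_tmul_left_central (F := F) (G := G) (H := H) (ha := hL),
      central_mul_lie hP, central_mul_lie hQ,
      add_lie_ring,
      lie_tmul_left_central (F := F) (G := G) (H := H)
        (ha := hP.mul (comm_central hG _ _)),
      lie_tmul_right_central (F := F) (G := G) (H := H)
        (hu := hQ.mul (comm_central hH _ _)),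
      central_mul_lie hK, central_mul_lie hL,
      peel12 g (m+1), peel12 h (m+1), peel45 h m, peel45 g m]
    simp only [show 2*(m+1+1)+1 = 2*m+5 from by ring, show 2*(m+1)+1 = 2*m+3 from by ring,
      show 2*(m+1)+2 = 2*m+4 from by ring, show 2*(m+1)+3 = 2*m+5 from by ring, mul_assoc]

end main

/-- Lemma 2.1 of [DK17], odd case: formula for
`c₂ₙ₊₁ = [g₁ ⊗ h₁, …, g₂ₙ₊₁ ⊗ h₂ₙ₊₁]` in `G ⊗ H` when `n ≥ 1`. -/
theorem statement_5 (F : Type*) [Field F]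
    (G H : Type*) [Ring G] [Algebra F G] [Ring H] [Algebra F H]
    (hG : ∀ a b c : G, ⁅⁅a, b⁆, c⁆ = 0) (hH : ∀ a b c : H, ⁅⁅a, b⁆, c⁆ = 0)
    (n : ℕ) (hn : 1 ≤ n) (g : ℕ → G) (h : ℕ → H) :
    lcomm (List.ofFn fun i : Fin (2 * n + 1) => (g (i + 1) ⊗ₜ[F] h (i + 1) : G ⊗[F] H))
      = ((List.ofFn fun i : Fin n => ⁅g (2 * i + 1), g (2 * i + 2)⁆).prod * g (2 * n + 1))
          ⊗ₜ[F] (⁅h 1 * h 2, h 3⁆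
            * (List.ofFn fun i : Fin (n - 1) => ⁅h (2 * i + 4), h (2 * i + 5)⁆).prod)
        + (⁅g 2 * g 1, g 3⁆
            * (List.ofFn fun i : Fin (n - 1) => ⁅g (2 * i + 4), g (2 * i + 5)⁆).prod)
          ⊗ₜ[F] ((List.ofFn fun i : Fin n => ⁅h (2 * i + 1), h (2 * i + 2)⁆).prod
            * h (2 * n + 1)) := by
  obtain ⟨m, rfl⟩ : ∃ m, n = m + 1 := ⟨n - 1, (Nat.succ_pred_eq_of_pos hn).symm⟩
  exact key hG hH g h m
end

section
/- Let G and H be unital associative F-algebras with all triple commutators zero. Let v_1 = g_1 ⊗ 1, v_i = g_i ⊗ h_i for 2 ≤ i ≤ 2m'-1, and v_{2m'} = g_{2m'} ⊗ 1 in G ⊗ H. Then the left-normed commutator [v_1, ..., v_{2m'}] equals [g_1,g_2][g_3,g_4]···[g_{2m'-1},g_{2m'}] ⊗ [h_2,h_3][h_4,h_5]···[h_{2m'-2},h_{2m'-1}]. -/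
open scoped TensorProduct

lemma lc_concat {A : Type*} [Ring A] (b : A) :
    ∀ (l : List A) (a : A), lc a (l ++ [b]) = ⁅lc a l, b⁆
  | [], a => rfl
  | x :: l, a => by
    show lc ⁅a, x⁆ (l ++ [b]) = ⁅lc ⁅a, x⁆ l, b⁆
    exact lc_concat b l ⁅a, x⁆

lemma lcomm_append {A : Type*} [Ring A] (b : A) :
    ∀ (l : List A), l ≠ [] → lcomm (l ++ [b]) = ⁅lcomm l, b⁆
  | [], hl => absurd rfl hl
  | a :: l, _ => lc_concat b l a

lemma lcomm_ofFn_succ {A : Type*} [Ring A] (k : ℕ) (hk : 1 ≤ k) (f : Fin (k + 1) → A) :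
    lcomm (List.ofFn f)
      = ⁅lcomm (List.ofFn fun i : Fin k => f i.castSucc), f (Fin.last k)⁆ := by
  rw [List.ofFn_succ', List.concat_eq_append]
  apply lcomm_append
  rw [Ne, List.ofFn_eq_nil_iff]
  omega

/-- auxiliary product of `g`-commutators -/
def Pprod {G : Type*} [Ring G] (g : ℕ → G) (j : ℕ) : G :=
  (List.ofFn fun i : Fin j => ⁅g (2 * (i : ℕ) + 1), g (2 * (i : ℕ) + 2)⁆).prod

/-- auxiliary product of `h`-commutators -/
def Qprod {H : Type*} [Ring H] (h : ℕ → H) (j : ℕ) : H :=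
  (List.ofFn fun i : Fin j => ⁅h (2 * (i : ℕ) + 2), h (2 * (i : ℕ) + 3)⁆).prod

lemma Pprod_succ {G : Type*} [Ring G] (g : ℕ → G) (j : ℕ) :
    Pprod g (j + 1) = Pprod g j * ⁅g (2 * j + 1), g (2 * j + 2)⁆ := by
  unfold Pprod
  rw [List.ofFn_succ', List.concat_eq_append, List.prod_append, List.prod_cons, List.prod_nil,
    mul_one]
  simp only [Fin.coe_castSucc, Fin.val_last]

lemma Qprod_succ {H : Type*} [Ring H] (h : ℕ → H) (j : ℕ) :
    Qprod h (j + 1) = Qprod h j * ⁅h (2 * j + 2), h (2 * j + 3)⁆ := by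
  unfold Qprod
  rw [List.ofFn_succ', List.concat_eq_append, List.prod_append, List.prod_cons, List.prod_nil,
    mul_one]
  simp only [Fin.coe_castSucc, Fin.val_last]

lemma comm_central_s7 {G : Type*} [Ring G] (hG : ∀ a b c : G, ⁅⁅a, b⁆, c⁆ = 0)
    (a b x : G) : ⁅a, b⁆ * x = x * ⁅a, b⁆ := by
  have := hG a b x
  rw [Ring.lie_def, sub_eq_zero] at this
  exact this

lemma Pprod_central {G : Type*} [Ring G] (hG : ∀ a b c : G, ⁅⁅a, b⁆, c⁆ = 0)
    (g : ℕ → G) (j : ℕ) : ∀ x, Pprod g j * x = x * Pprod g j := by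
  induction j with
  | zero => intro x; simp [Pprod]
  | succ j ih =>
    intro x
    rw [Pprod_succ, mul_assoc, comm_central_s7 hG, ← mul_assoc, ih, mul_assoc]

lemma Qprod_central {H : Type*} [Ring H] (hH : ∀ a b c : H, ⁅⁅a, b⁆, c⁆ = 0)
    (h : ℕ → H) (j : ℕ) : ∀ x, Qprod h j * x = x * Qprod h j := by
  induction j with
  | zero => intro x; simp [Qprod]
  | succ j ih =>
    intro x
    rw [Qprod_succ, mul_assoc, comm_central_s7 hH, ← mul_assoc, ih, mul_assoc]

lemma tmul_lie {F : Type*} [Field F] {G H : Type*} [Ring G] [Algebra F G] [Ring H] [Algebra F H]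
    (p a x : G) (q y : H) (hp : ∀ z, p * z = z * p) (hq : ∀ z, q * z = z * q) :
    ⁅(p * a) ⊗ₜ[F] q, x ⊗ₜ[F] y⁆ = (p * ⁅a, x⁆) ⊗ₜ[F] (q * y) := by
  rw [Ring.lie_def, Algebra.TensorProduct.tmul_mul_tmul, Algebra.TensorProduct.tmul_mul_tmul,
    show x * (p * a) = p * (x * a) by rw [← mul_assoc, ← hp x, mul_assoc],
    show y * q = q * y from (hq y).symm, ← TensorProduct.sub_tmul, Ring.lie_def,
    mul_assoc, ← mul_sub]

lemma lie_tmul_s7 {F : Type*} [Field F] {G H : Type*} [Ring G] [Algebra F G] [Ring H] [Algebra F H]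
    (p x : G) (q b y : H) (hp : ∀ z, p * z = z * p) (hq : ∀ z, q * z = z * q) :
    ⁅p ⊗ₜ[F] (q * b), x ⊗ₜ[F] y⁆ = (p * x) ⊗ₜ[F] (q * ⁅b, y⁆) := by
  rw [Ring.lie_def, Algebra.TensorProduct.tmul_mul_tmul, Algebra.TensorProduct.tmul_mul_tmul,
    show x * p = p * x from (hp x).symm,
    show y * (q * b) = q * (y * b) by rw [← mul_assoc, ← hq y, mul_assoc],
    ← TensorProduct.tmul_sub, Ring.lie_def, mul_assoc, ← mul_sub]

/-- Corollary 2.3 of [DK17]: with `v₁ = g₁ ⊗ 1`, `vᵢ = gᵢ ⊗ hᵢ` (`2 ≤ i ≤ 2m'-1`),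
`v_{2m'} = g_{2m'} ⊗ 1`, one has
`[v₁, …, v_{2m'}] = [g₁,g₂]⋯[g_{2m'-1},g_{2m'}] ⊗ [h₂,h₃]⋯[h_{2m'-2},h_{2m'-1}]`. -/
theorem statement_7 (F : Type*) [Field F]
    (G H : Type*) [Ring G] [Algebra F G] [Ring H] [Algebra F H]
    (hG : ∀ a b c : G, ⁅⁅a, b⁆, c⁆ = 0) (hH : ∀ a b c : H, ⁅⁅a, b⁆, c⁆ = 0)
    (m' : ℕ) (hm : 1 ≤ m') (g : ℕ → G) (h : ℕ → H)
    (v : ℕ → G ⊗[F] H)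
    (hv1 : v 1 = g 1 ⊗ₜ[F] 1)
    (hvmid : ∀ i, 2 ≤ i → i ≤ 2 * m' - 1 → v i = g i ⊗ₜ[F] h i)
    (hvlast : v (2 * m') = g (2 * m') ⊗ₜ[F] 1) :
    lcomm (List.ofFn fun i : Fin (2 * m') => v (i + 1))
      = (List.ofFn fun i : Fin m' => ⁅g (2 * i + 1), g (2 * i + 2)⁆).prod
          ⊗ₜ[F] (List.ofFn fun i : Fin (m' - 1) => ⁅h (2 * i + 2), h (2 * i + 3)⁆).prod := by
  show lcomm (List.ofFn fun i : Fin (2 * m') => v (i + 1))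
      = Pprod g m' ⊗ₜ[F] Qprod h (m' - 1)
  have Cstep : ∀ k : ℕ, 1 ≤ k →
      lcomm (List.ofFn fun i : Fin (k + 1) => v (i + 1))
        = ⁅lcomm (List.ofFn fun i : Fin k => v (i + 1)), v (k + 1)⁆ := by
    intro k hk
    rw [lcomm_ofFn_succ k hk]
    simp only [Fin.coe_castSucc, Fin.val_last]
  obtain ⟨n, rfl⟩ : ∃ n, m' = n + 1 := ⟨m' - 1, by omega⟩
  rcases Nat.eq_zero_or_pos n with rfl | hn
  · -- m' = 1
    have h2 : lcomm (List.ofFn fun i : Fin (2 * 1) => v (i + 1)) = ⁅v 1, v 2⁆ := by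
      simp [lcomm, lc, List.ofFn_succ]
    show lcomm (List.ofFn fun i : Fin (2 * 1) => v (i + 1)) = Pprod g 1 ⊗ₜ[F] Qprod h 0
    rw [h2, hv1, show v 2 = v (2 * 1) from rfl, hvlast]
    have e1 := tmul_lie (F := F) (G := G) (H := H) 1 (g 1) (g (2 * 1)) 1 1
      (fun z => by simp) (fun z => by simp)
    simp only [one_mul] at e1
    rw [e1]
    simp [Pprod, Qprod]
  · -- m' = n + 1 ≥ 2
    have hmid : ∀ i, 2 ≤ i → i ≤ 2 * n + 1 → v i = g i ⊗ₜ[F] h i := by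
      intro i h2 hi
      exact hvmid i h2 (by omega)
    have key : ∀ j, 1 ≤ j → j ≤ n →
        (lcomm (List.ofFn fun i : Fin (2 * j) => v (i + 1))
            = Pprod g j ⊗ₜ[F] (Qprod h (j - 1) * h (2 * j)))
        ∧ (lcomm (List.ofFn fun i : Fin (2 * j + 1) => v (i + 1))
            = (Pprod g j * g (2 * j + 1)) ⊗ₜ[F] Qprod h j) := by
      intro j
      induction j with
      | zero => omega
      | succ j ih =>
        intro _ hj
        rcases Nat.eq_zero_or_pos j with rfl | hj0
        · -- base case: j + 1 = 1
          have h2 : lcomm (List.ofFn fun i : Fin (2 * 1) => v (i + 1)) = ⁅v 1, v 2⁆ := by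
            simp [lcomm, lc, List.ofFn_succ]
          have e1 := tmul_lie (F := F) (G := G) (H := H) 1 (g 1) (g 2) 1 (h 2)
            (fun z => by simp) (fun z => by simp)
          simp only [one_mul] at e1
          constructor
          · show lcomm (List.ofFn fun i : Fin (2 * 1) => v (i + 1))
                = Pprod g 1 ⊗ₜ[F] (Qprod h 0 * h 2)
            rw [h2, hv1, hmid 2 (by omega) (by omega), e1]
            simp [Pprod, Qprod]
          · show lcomm (List.ofFn fun i : Fin (2 * 1 + 1) => v (i + 1))
                = (Pprod g 1 * g 3) ⊗ₜ[F] Qprod h 1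
            rw [Cstep (2 * 1) (by omega), h2, hv1, hmid 2 (by omega) (by omega),
              hmid 3 (by omega) (by omega), e1]
            have e2 := lie_tmul_s7 (F := F) (G := G) (H := H) ⁅g 1, g 2⁆ (g 3) 1 (h 2) (h 3)
              (fun z => comm_central_s7 hG _ _ z) (fun z => by simp)
            rw [one_mul] at e2
            rw [e2]
            simp [Pprod, Qprod]
        · -- inductive step
          obtain ⟨ihA, ihB⟩ := ih (by omega) (by omega)
          have hA : lcomm (List.ofFn fun i : Fin (2 * j + 2) => v (i + 1))
              = Pprod g (j + 1) ⊗ₜ[F] (Qprod h j * h (2 * j + 2)) := by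
            show lcomm (List.ofFn fun i : Fin (2 * j + 1 + 1) => v (i + 1))
                = Pprod g (j + 1) ⊗ₜ[F] (Qprod h j * h (2 * j + 2))
            rw [Cstep (2 * j + 1) (by omega), ihB, hmid (2 * j + 1 + 1) (by omega) (by omega)]
            rw [tmul_lie (F := F) (Pprod g j) (g (2 * j + 1)) (g (2 * j + 1 + 1))
              (Qprod h j) (h (2 * j + 1 + 1)) (Pprod_central hG g j) (Qprod_central hH h j)]
            rw [show (2 * j + 1 + 1 : ℕ) = 2 * j + 2 from rfl, ← Pprod_succ]
          constructor
          · exact hA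
          · show lcomm (List.ofFn fun i : Fin (2 * j + 2 + 1) => v (i + 1))
                = (Pprod g (j + 1) * g (2 * j + 2 + 1)) ⊗ₜ[F] Qprod h (j + 1)
            rw [Cstep (2 * j + 2) (by omega), hA, hmid (2 * j + 2 + 1) (by omega) (by omega)]
            rw [lie_tmul_s7 (F := F) (Pprod g (j + 1)) (g (2 * j + 2 + 1)) (Qprod h j)
              (h (2 * j + 2)) (h (2 * j + 2 + 1))
              (Pprod_central hG g (j + 1)) (Qprod_central hH h j)]
            rw [show (2 * j + 2 + 1 : ℕ) = 2 * j + 3 from rfl, ← Qprod_succ]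
    obtain ⟨_, hB⟩ := key n hn le_rfl
    show lcomm (List.ofFn fun i : Fin (2 * n + 1 + 1) => v (i + 1))
        = Pprod g (n + 1) ⊗ₜ[F] Qprod h n
    rw [Cstep (2 * n + 1) (by omega), hB,
      show (2 * n + 1 + 1 : ℕ) = 2 * (n + 1) by omega, hvlast]
    rw [tmul_lie (F := F) (Pprod g n) (g (2 * n + 1)) (g (2 * (n + 1))) (Qprod h n) 1
      (Pprod_central hG g n) (Qprod_central hH h n)]
    rw [show (2 * (n + 1) : ℕ) = 2 * n + 2 by omega, ← Pprod_succ, mul_one]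
end
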